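/- For complex q, z with |q| < 1 and |z| ≤ 1 (and no denominator vanishing), Andrews' generalized mock theta function ω(z;q) := Σ_{n≥0} zⁿ q^{2n²+2n} / ((q; q²)_{n+1} (zq; q²)_{n+1}) equals Σ_{n≥0} zⁿ qⁿ / (q; q²)_{n+1}. -/

import Mathlib

open scoped BigOperators

/-- Finite q-Pochhammer symbol `(a; q)_n`. -/
noncomputable def qPoch (a q : ℂ) (n : ℕ) : ℂ :=
  ∏ k ∈ Finset.range n, (1 - a * q ^ k)

/-- Infinite q-Pochhammer symbol `(a; q)_∞`. -/
noncomputable def qPochInf (a q : ℂ) : ℂ :=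
  ∏' k : ℕ, (1 - a * q ^ k)

set_option maxHeartbeats 1000000

open Finset




noncomputable def gb (q : ℂ) (m n : ℕ) : ℂ :=
  ∏ k ∈ Finset.range n, ((1 - q ^ (2 * (m + k + 1))) / (1 - q ^ (2 * (k + 1))))

section gbLemmas
variable {q : ℂ} (hq : ‖q‖ < 1)
include hq

lemma one_sub_pow_ne {j : ℕ} (hj : 1 ≤ j) : 1 - q ^ j ≠ 0 := by
  intro h
  have : q ^ j = 1 := by linear_combination -h
  have h2 : ‖q ^ j‖ < 1 := by
    rw [norm_pow]
    calc ‖q‖ ^ j ≤ ‖q‖ ^ 1 := pow_le_pow_of_le_one (norm_nonneg q) hq.le hj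
      _ = ‖q‖ := pow_one _
      _ < 1 := hq
  rw [this] at h2; simp at h2

lemma gb_zero_left (n : ℕ) : gb q 0 n = 1 := by
  unfold gb
  apply Finset.prod_eq_one
  intro k _
  rw [show 2 * (0 + k + 1) = 2 * (k + 1) by ring]
  exact div_self (one_sub_pow_ne hq (by omega))

lemma gb_succ_mul (m n : ℕ) :
    gb q m (n + 1) * (1 - q ^ (2 * (n + 1))) = gb q m n * (1 - q ^ (2 * (m + n + 1))) := by
  unfold gb
  rw [Finset.prod_range_succ]
  rw [mul_assoc, div_mul_cancel₀ _ (one_sub_pow_ne hq (by omega))]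

lemma gb_shift_mul (m n : ℕ) :
    gb q (m + 1) n * (1 - q ^ (2 * (m + 1))) = gb q m n * (1 - q ^ (2 * (m + n + 1))) := by
  induction n with
  | zero => simp [gb]
  | succ n ih =>
    have h1 := gb_succ_mul hq (m + 1) n
    have h2 := gb_succ_mul hq m n
    have hn1 : (1 - q ^ (2 * (n + 1))) ≠ 0 := one_sub_pow_ne hq (by omega)
    apply mul_right_cancel₀ hn1
    calc gb q (m+1) (n+1) * (1 - q ^ (2*(m+1))) * (1 - q ^ (2*(n+1)))
        = (gb q (m+1) (n+1) * (1 - q ^ (2*(n+1)))) * (1 - q ^ (2*(m+1))) := by ring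
      _ = gb q (m+1) n * (1 - q ^ (2*(m+1+n+1))) * (1 - q ^ (2*(m+1))) := by rw [h1]
      _ = (gb q (m+1) n * (1 - q ^ (2*(m+1)))) * (1 - q ^ (2*(m+1+n+1))) := by ring
      _ = gb q m n * (1 - q ^ (2*(m+n+1))) * (1 - q ^ (2*(m+1+n+1))) := by rw [ih]
      _ = (gb q m (n+1) * (1 - q ^ (2*(n+1)))) * (1 - q ^ (2*(m+1+n+1))) := by rw [h2]
      _ = gb q m (n+1) * (1 - q ^ (2*(m+(n+1)+1))) * (1 - q ^ (2*(n+1))) := by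
          ring_nf
  -- done?

lemma gb_pascalB (m n : ℕ) :
    gb q (m + 1) (n + 1) = q ^ (2 * (n + 1)) * gb q m (n + 1) + gb q (m + 1) n := by
  have hm1 : (1 - q ^ (2 * (m + 1))) ≠ 0 := one_sub_pow_ne hq (by omega)
  apply mul_right_cancel₀ hm1
  rw [gb_shift_mul hq m (n + 1), add_mul, mul_assoc, gb_shift_mul hq m n,
    ← gb_succ_mul hq m n]
  ring

lemma gb_pascalA (m n : ℕ) :
    gb q (m + 1) (n + 1) = gb q m (n + 1) + q ^ (2 * (m + 1)) * gb q (m + 1) n := by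
  have hm1 : (1 - q ^ (2 * (m + 1))) ≠ 0 := one_sub_pow_ne hq (by omega)
  apply mul_right_cancel₀ hm1
  rw [gb_shift_mul hq m (n + 1), add_mul, mul_assoc, gb_shift_mul hq m n,
    ← gb_succ_mul hq m n]
  ring

end gbLemmas

section gcLemmas
variable {q : ℂ} (hq : ‖q‖ < 1)

/-- Gaussian binomial C(N, n) with base q². -/
noncomputable def gc (q : ℂ) (N n : ℕ) : ℂ := if n ≤ N then gb q (N - n) n else 0

include hq

lemma gc_pascal (N n : ℕ) :
    gc q (N + 1) (n + 1) = gc q N (n + 1) + q ^ (2 * (N - n)) * gc q N n := by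
  rcases lt_trichotomy n N with h | h | h
  · -- n < N
    have h1 : n + 1 ≤ N + 1 := by omega
    have h2 : n + 1 ≤ N := by omega
    have h3 : n ≤ N := by omega
    rw [gc, gc, gc, if_pos h1, if_pos h2, if_pos h3]
    have e1 : N + 1 - (n + 1) = (N - n - 1) + 1 := by omega
    have e2 : N - (n + 1) = N - n - 1 := by omega
    have e3 : N - n = (N - n - 1) + 1 := by omega
    rw [e1, e2]
    nth_rewrite 3 [e3]
    rw [gb_pascalA hq (N - n - 1) n, ← e3]
  · -- n = N
    subst h
    rw [gc, gc, gc, if_pos (le_refl (n+1)), if_neg (by omega), if_pos (le_refl n)]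
    simp only [Nat.sub_self, zero_add]
    rw [gb_zero_left hq, gb_zero_left hq]
    norm_num
  · -- n > N
    rw [gc, gc, gc, if_neg (by omega), if_neg (by omega), if_neg (by omega)]
    simp

lemma gc_diag_zero {N n : ℕ} (h : N < n) : gc q N n = 0 := by rw [gc, if_neg (by omega)]

lemma gc_zero (N : ℕ) : gc q N 0 = 1 := by rw [gc, if_pos (Nat.zero_le N)]; simp [gb]

end gcLemmas

/-- `pp q a b = ∏_{k=a}^{b-1} (1 - q^(2k+1))`. -/
noncomputable def pp (q : ℂ) (a b : ℕ) : ℂ := ∏ k ∈ Finset.Ico a b, (1 - q ^ (2 * k + 1))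

section ppLemmas
variable {q : ℂ} (hq : ‖q‖ < 1)

lemma pp_self (a : ℕ) : pp q a a = 1 := by simp [pp]

lemma pp_succ_top {a b : ℕ} (h : a ≤ b) :
    pp q a (b + 1) = pp q a b * (1 - q ^ (2 * b + 1)) := by
  rw [pp, pp, Finset.prod_Ico_succ_top h]

lemma pp_mul {a b c : ℕ} (hab : a ≤ b) (hbc : b ≤ c) :
    pp q a b * pp q b c = pp q a c := by
  rw [pp, pp, pp, Finset.prod_Ico_consecutive _ hab hbc]

include hq
lemma pp_ne_zero (a b : ℕ) : pp q a b ≠ 0 := by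
  rw [pp]
  exact Finset.prod_ne_zero_iff.mpr fun k _ => one_sub_pow_ne hq (by omega)
end ppLemmas

/-- The key finite identity `H(j, N) = 1`. -/
lemma finite_identity {q : ℂ} (hq : ‖q‖ < 1) :
    ∀ N j, ∑ n ∈ Finset.range (N + 1),
      q ^ (2 * n ^ 2 + (2 * j + 1) * n) * gc q N n * pp q (n + j + 1) (N + j + 1) = 1 := by
  intro N
  induction N with
  | zero =>
    intro j
    simp [gc_zero hq, pp_self]
  | succ N ih =>
    intro j
    rw [Finset.sum_range_succ']
    -- n = 0 term:  q^0 * gc (N+1) 0 * pp (j+1) (N+j+2)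
    have hzero : q ^ (2 * 0 ^ 2 + (2 * j + 1) * 0) * gc q (N + 1) 0 * pp q (0 + j + 1) (N + 1 + j + 1)
        = q ^ (2 * 0 ^ 2 + (2 * j + 1) * 0) * gc q N 0 * pp q (0 + j + 1) (N + 1 + j + 1) := by
      rw [gc_zero hq, gc_zero hq]
    rw [hzero]
    -- pascal on each summand
    have hterm : ∀ m ∈ Finset.range (N + 1),
        q ^ (2 * (m+1) ^ 2 + (2 * j + 1) * (m+1)) * gc q (N + 1) (m+1) * pp q ((m+1) + j + 1) (N + 1 + j + 1)
        = q ^ (2 * (m+1) ^ 2 + (2 * j + 1) * (m+1)) * gc q N (m+1) * pp q ((m+1) + j + 1) (N + 1 + j + 1)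
          + q ^ (2*N+2*j+3) * (q ^ (2 * m ^ 2 + (2 * (j+1) + 1) * m) * gc q N m * pp q (m + (j+1) + 1) (N + (j+1) + 1)) := by
      intro m hm
      rw [Finset.mem_range] at hm
      rw [gc_pascal hq N m]
      have hsub : ∃ t, N = m + t := ⟨N - m, by omega⟩
      obtain ⟨t, rfl⟩ := hsub
      have e1 : m + t - m = t := by omega
      rw [e1]
      have epow : q ^ (2 * (m+1) ^ 2 + (2 * j + 1) * (m+1)) * q ^ (2 * t)
          = q ^ (2*(m+t)+2*j+3) * q ^ (2 * m ^ 2 + (2 * (j+1) + 1) * m) := by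
        rw [← pow_add, ← pow_add]
        congr 1
        ring
      have eprod : ((m+1) + j + 1) = (m + (j+1) + 1) := by omega
      have eprod2 : (m + t + 1 + j + 1) = (m + t + (j+1) + 1) := by omega
      rw [eprod, eprod2]
      linear_combination gc q (m+t) m * pp q (m + (j+1) + 1) (m + t + (j+1) + 1) * epow
    rw [Finset.sum_congr rfl hterm, Finset.sum_add_distrib, ← Finset.mul_sum, ih (j+1)]
    have hw : q ^ (2*(N+j+1)+1) = q ^ (2*N+2*j+3) := by congr 1; omega
    have hA : (∑ m ∈ Finset.range (N+1),
          q ^ (2*(m+1)^2+(2*j+1)*(m+1)) * gc q N (m+1) * pp q ((m+1)+j+1) (N+1+j+1))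
        + q ^ (2*0^2+(2*j+1)*0) * gc q N 0 * pp q (0+j+1) (N+1+j+1)
        = 1 - q ^ (2*N+2*j+3) := by
      rw [← Finset.sum_range_succ'
        (fun n => q ^ (2*n^2+(2*j+1)*n) * gc q N n * pp q (n+j+1) (N+1+j+1)) (N+1)]
      rw [Finset.sum_range_succ]
      rw [gc_diag_zero hq (by omega : N < N + 1)]
      rw [mul_zero, zero_mul, add_zero]
      have hsplit : ∀ n ∈ Finset.range (N+1),
          q ^ (2*n^2+(2*j+1)*n) * gc q N n * pp q (n+j+1) (N+1+j+1)
          = (q ^ (2*n^2+(2*j+1)*n) * gc q N n * pp q (n+j+1) (N+j+1)) * (1 - q ^ (2*(N+j+1)+1)) := by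
        intro n hn
        rw [Finset.mem_range] at hn
        rw [show N+1+j+1 = (N+j+1)+1 from by omega, pp_succ_top (by omega)]
        ring
      rw [Finset.sum_congr rfl hsplit, ← Finset.sum_mul, ih j, one_mul, hw]
    linear_combination hA

-- real lemma: exp(-(x/(1-r))) ≤ 1 - x for 0 ≤ x ≤ r < 1
lemma exp_le_one_sub {r x : ℝ} (h0 : 0 ≤ x) (hxr : x ≤ r) (h1 : r < 1) :
    Real.exp (-(x * (1 - r)⁻¹)) ≤ 1 - x := by
  have h1r : 0 < 1 - r := by linarith
  have hx1 : 0 < 1 - x := by linarith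
  set t := x * (1 - r)⁻¹ with ht
  have htn : 0 ≤ t := mul_nonneg h0 (le_of_lt (inv_pos.mpr h1r))
  have hexp : 1 + t ≤ Real.exp t := by linarith [Real.add_one_le_exp t]
  have key : 1 ≤ (1 - x) * (1 + t) := by
    rw [ht]
    have : (1 - x) * (1 + x * (1 - r)⁻¹) = 1 - x + (x * (1 - x)) * (1 - r)⁻¹ := by ring
    rw [this]
    have h2 : x * (1 - r) ≤ x * (1 - x) := by nlinarith
    have h3 : x = (x * (1 - r)) * (1 - r)⁻¹ := by field_simp
    nlinarith [mul_le_mul_of_nonneg_right h2 (le_of_lt (inv_pos.mpr h1r))]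
  rw [Real.exp_neg]
  rw [inv_le_comm₀ (Real.exp_pos t) hx1]
  calc (1 - x)⁻¹ ≤ 1 + t := by
        rw [inv_le_iff_one_le_mul₀ hx1]
        linarith [key]
      _ ≤ Real.exp t := hexp

/-- uniform lower bound for partial products -/
lemma prod_one_sub_pow_ge {r : ℝ} (h0 : 0 ≤ r) (h1 : r < 1) (e : ℕ → ℕ)
    (he : ∀ k, k + 1 ≤ e k) (n : ℕ) :
    Real.exp (-((1 - r)⁻¹ * (1 - r)⁻¹)) ≤ ∏ k ∈ range n, (1 - r ^ e k) := by
  have h1r : 0 < 1 - r := by linarith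
  have hx : ∀ k, r ^ e k ≤ r := by
    intro k
    calc r ^ e k ≤ r ^ 1 := pow_le_pow_of_le_one h0 h1.le (le_trans (Nat.le_add_left 1 k) (he k))
    _ = r := pow_one r
  have step : ∀ k ∈ range n, Real.exp (-(r ^ e k * (1 - r)⁻¹)) ≤ 1 - r ^ e k := by
    intro k _
    exact exp_le_one_sub (pow_nonneg h0 _) (hx k) h1
  calc Real.exp (-((1 - r)⁻¹ * (1 - r)⁻¹))
      ≤ Real.exp (∑ k ∈ range n, -(r ^ e k * (1 - r)⁻¹)) := by
        apply Real.exp_le_exp.mpr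
        have hsum : ∑ k ∈ range n, r ^ e k ≤ (1 - r)⁻¹ := by
          calc ∑ k ∈ range n, r ^ e k ≤ ∑ k ∈ range n, r ^ k := by
                apply Finset.sum_le_sum
                intro k _
                exact pow_le_pow_of_le_one h0 h1.le (le_trans (Nat.le_succ k) (he k))
            _ ≤ ∑' k : ℕ, r ^ k :=
                Summable.sum_le_tsum _ (fun k _ => pow_nonneg h0 k) (summable_geometric_of_lt_one h0 h1)
            _ = (1 - r)⁻¹ := tsum_geometric_of_lt_one h0 h1
        have : ∑ k ∈ range n, -(r ^ e k * (1 - r)⁻¹) = -((∑ k ∈ range n, r ^ e k) * (1 - r)⁻¹) := by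
          rw [Finset.sum_neg_distrib, Finset.sum_mul]
        rw [this]
        have := mul_le_mul_of_nonneg_right hsum (inv_pos.mpr (by linarith : (0:ℝ) < 1 - r)).le
        linarith
    _ = ∏ k ∈ range n, Real.exp (-(r ^ e k * (1 - r)⁻¹)) := by rw [Real.exp_sum]
    _ ≤ ∏ k ∈ range n, (1 - r ^ e k) :=
        Finset.prod_le_prod (fun k _ => (Real.exp_pos _).le) step

noncomputable def cbd (r : ℝ) : ℝ := Real.exp (-((1 - r)⁻¹ * (1 - r)⁻¹))

lemma cbd_pos (r : ℝ) : 0 < cbd r := Real.exp_pos _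

section bounds
variable {q : ℂ} (hq : ‖q‖ < 1)
include hq

lemma norm_one_sub_pow_ge {j : ℕ} (hj : 1 ≤ j) : 1 - ‖q‖ ^ j ≤ ‖1 - q ^ j‖ := by
  calc 1 - ‖q‖ ^ j = ‖(1:ℂ)‖ - ‖q ^ j‖ := by rw [norm_one, norm_pow]
    _ ≤ ‖1 - q ^ j‖ := norm_sub_norm_le _ _

lemma gb_norm_le (m n : ℕ) : ‖gb q m n‖ ≤ 2 ^ n / cbd ‖q‖ := by
  have h0 : (0:ℝ) ≤ ‖q‖ := norm_nonneg q
  have hlb := prod_one_sub_pow_ge h0 hq (fun k => 2 * (k + 1)) (fun k => by show k + 1 ≤ 2 * (k + 1); omega) n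
  have hfac : ∀ k ∈ Finset.range n,
      ‖(1 - q ^ (2 * (m + k + 1))) / (1 - q ^ (2 * (k + 1)))‖ ≤ 2 / (1 - ‖q‖ ^ (2 * (k + 1))) := by
    intro k _
    rw [norm_div]
    have hd : 0 < 1 - ‖q‖ ^ (2 * (k + 1)) := by
      have : ‖q‖ ^ (2 * (k + 1)) < 1 := by
        apply pow_lt_one₀ h0 hq; omega
      linarith
    apply div_le_div₀ (by norm_num)
    · calc ‖1 - q ^ (2 * (m + k + 1))‖ ≤ ‖(1:ℂ)‖ + ‖q ^ (2 * (m + k + 1))‖ := norm_sub_le _ _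
        _ ≤ 1 + 1 := by
            rw [norm_one, norm_pow]
            have : ‖q‖ ^ (2 * (m + k + 1)) ≤ 1 := pow_le_one₀ h0 hq.le
            linarith
        _ = 2 := by norm_num
    · exact hd
    · exact norm_one_sub_pow_ge hq (by omega)
  calc ‖gb q m n‖ = ∏ k ∈ Finset.range n, ‖(1 - q ^ (2 * (m + k + 1))) / (1 - q ^ (2 * (k + 1)))‖ := by
        rw [gb, norm_prod]
    _ ≤ ∏ k ∈ Finset.range n, (2 / (1 - ‖q‖ ^ (2 * (k + 1)))) := by
        apply Finset.prod_le_prod (fun k _ => norm_nonneg _) hfac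
    _ = 2 ^ n / ∏ k ∈ Finset.range n, (1 - ‖q‖ ^ (2 * (k + 1))) := by
        rw [Finset.prod_div_distrib, Finset.prod_const, Finset.card_range]
    _ ≤ 2 ^ n / cbd ‖q‖ := by
        apply div_le_div_of_nonneg_left (by positivity) (cbd_pos _) hlb

lemma qb_summable {x : ℂ} (hx : ‖x‖ < 1) (n : ℕ) :
    Summable (fun m => gb q m n * x ^ m) := by
  apply Summable.of_norm_bounded (g := fun m => (2 ^ n / cbd ‖q‖) * ‖x‖ ^ m)
    ((summable_geometric_of_lt_one (norm_nonneg x) hx).mul_left _)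
  intro m
  rw [norm_mul, norm_pow]
  exact mul_le_mul_of_nonneg_right (gb_norm_le hq m n) (by positivity)

lemma one_sub_mul_pow_ne {x : ℂ} (hx : ‖x‖ < 1) (j : ℕ) : 1 - x * q ^ j ≠ 0 := by
  intro h
  have h1 : x * q ^ j = 1 := by linear_combination -h
  have : ‖x * q ^ j‖ < 1 := by
    rw [norm_mul, norm_pow]
    calc ‖x‖ * ‖q‖ ^ j ≤ ‖x‖ * 1 := by
          apply mul_le_mul_of_nonneg_left (pow_le_one₀ (norm_nonneg q) hq.le) (norm_nonneg x)
      _ = ‖x‖ := mul_one _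
      _ < 1 := hx
  rw [h1] at this; simp at this

lemma qbinom {x : ℂ} (hx : ‖x‖ < 1) (n : ℕ) :
    ∑' m : ℕ, gb q m n * x ^ m = (∏ k ∈ Finset.range (n + 1), (1 - x * q ^ (2 * k)))⁻¹ := by
  induction n with
  | zero =>
    simp only [gb, Finset.prod_range_zero, one_mul, zero_add, Finset.prod_range_one, mul_zero, pow_zero,
      mul_one]
    exact tsum_geometric_of_norm_lt_one hx
  | succ n ih =>
    have hs : Summable (fun m => gb q m (n + 1) * x ^ m) := qb_summable hq hx (n + 1)
    have hsn : Summable (fun m => gb q m n * x ^ m) := qb_summable hq hx n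
    have hshift : Summable (fun m => gb q (m + 1) n * x ^ (m + 1)) := by
      exact (summable_nat_add_iff 1).mpr hsn
    have hexp : ∑' m : ℕ, gb q m (n+1) * x ^ m
        = 1 + ∑' m : ℕ, gb q (m+1) (n+1) * x ^ (m+1) := by
      rw [Summable.tsum_eq_zero_add hs, gb_zero_left hq, pow_zero, mul_one]
    have hterm : ∀ m : ℕ, gb q (m+1) (n+1) * x ^ (m+1)
        = (x * q ^ (2*(n+1))) * (gb q m (n+1) * x ^ m) + gb q (m+1) n * x ^ (m+1) := by
      intro m
      rw [gb_pascalB hq m n]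
      ring
    have htail : ∑' m : ℕ, gb q (m+1) n * x ^ (m+1)
        = (∑' m : ℕ, gb q m n * x ^ m) - 1 := by
      rw [Summable.tsum_eq_zero_add hsn, gb_zero_left hq, pow_zero, mul_one]
      ring
    have hsplit : ∑' m : ℕ, gb q (m+1) (n+1) * x ^ (m+1)
        = (x * q ^ (2*(n+1))) * (∑' m : ℕ, gb q m (n+1) * x ^ m)
          + ((∑' m : ℕ, gb q m n * x ^ m) - 1) := by
      calc ∑' m : ℕ, gb q (m+1) (n+1) * x ^ (m+1)
          = ∑' m : ℕ, ((x * q ^ (2*(n+1))) * (gb q m (n+1) * x ^ m) + gb q (m+1) n * x ^ (m+1)) := by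
            exact tsum_congr hterm
        _ = (∑' m : ℕ, (x * q ^ (2*(n+1))) * (gb q m (n+1) * x ^ m))
            + ∑' m : ℕ, gb q (m+1) n * x ^ (m+1) :=
            Summable.tsum_add (hs.mul_left _) hshift
        _ = (x * q ^ (2*(n+1))) * (∑' m : ℕ, gb q m (n+1) * x ^ m)
            + ((∑' m : ℕ, gb q m n * x ^ m) - 1) := by
            rw [tsum_mul_left, htail]
    have hne : (1 - x * q ^ (2*(n+1))) ≠ 0 := one_sub_mul_pow_ne hq hx _
    have hlin : (1 - x * q ^ (2*(n+1))) * (∑' m : ℕ, gb q m (n+1) * x ^ m)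
        = ∑' m : ℕ, gb q m n * x ^ m := by
      linear_combination hexp + hsplit
    rw [Finset.prod_range_succ, mul_inv, ← ih, ← hlin, mul_comm (1 - x * q ^ (2*(n+1))),
      mul_inv_cancel_right₀ hne]
end bounds

lemma pp_norm_ge {q : ℂ} (hq : ‖q‖ < 1) (n : ℕ) : cbd ‖q‖ ≤ ‖pp q 0 n‖ := by
  have h0 : (0:ℝ) ≤ ‖q‖ := norm_nonneg q
  calc cbd ‖q‖ ≤ ∏ k ∈ Finset.range n, (1 - ‖q‖ ^ (2 * k + 1)) :=
        prod_one_sub_pow_ge h0 hq (fun k => 2 * k + 1) (fun k => by show k + 1 ≤ 2 * k + 1; omega) n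
    _ ≤ ∏ k ∈ Finset.range n, ‖1 - q ^ (2 * k + 1)‖ := by
        apply Finset.prod_le_prod
        · intro k _
          have : ‖q‖ ^ (2 * k + 1) ≤ 1 := pow_le_one₀ h0 hq.le
          linarith
        · intro k _
          exact norm_one_sub_pow_ge hq (by omega)
    _ = ‖pp q 0 n‖ := by rw [pp, Finset.range_eq_Ico, norm_prod]

noncomputable def uu (q z : ℂ) (p : ℕ × ℕ) : ℂ :=
  z ^ p.1 * q ^ (2 * p.1 ^ 2 + 2 * p.1) / pp q 0 (p.1 + 1) * (gb q p.2 p.1 * (z * q) ^ p.2)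

section main
variable {q z : ℂ} (hq : ‖q‖ < 1) (hz : ‖z‖ ≤ 1)
include hq hz

lemma uu_summable_aux :
    Summable (fun n : ℕ => (2:ℝ) ^ n * ‖q‖ ^ (2 * n ^ 2 + 2 * n) / (cbd ‖q‖ * cbd ‖q‖)) := by
  have h0 : (0:ℝ) ≤ ‖q‖ := norm_nonneg q
  apply summable_of_ratio_norm_eventually_le (by norm_num : (1:ℝ)/2 < 1)
  have htop : Filter.Tendsto (fun n : ℕ => 4 * n + 4) Filter.atTop Filter.atTop :=
    Filter.tendsto_atTop_mono (fun n => by simp only [id_eq]; omega) Filter.tendsto_id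
  have hcomp : Filter.Tendsto (fun n : ℕ => ‖q‖ ^ (4 * n + 4)) Filter.atTop (nhds 0) :=
    (tendsto_pow_atTop_nhds_zero_of_lt_one h0 hq).comp htop
  have hev : ∀ᶠ n : ℕ in Filter.atTop, ‖q‖ ^ (4 * n + 4) ≤ 1/4 :=
    hcomp.eventually (eventually_le_nhds (by norm_num))
  filter_upwards [hev] with n hn
  have hpos : (0:ℝ) < cbd ‖q‖ * cbd ‖q‖ := mul_pos (cbd_pos _) (cbd_pos _)
  have e1 : (0:ℝ) ≤ (2:ℝ) ^ n * ‖q‖ ^ (2 * n ^ 2 + 2 * n) / (cbd ‖q‖ * cbd ‖q‖) :=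
    div_nonneg (by positivity) hpos.le
  have e2 : (0:ℝ) ≤ (2:ℝ) ^ (n+1) * ‖q‖ ^ (2 * (n+1) ^ 2 + 2 * (n+1)) / (cbd ‖q‖ * cbd ‖q‖) :=
    div_nonneg (by positivity) hpos.le
  rw [Real.norm_of_nonneg e2, Real.norm_of_nonneg e1]
  have hexpand : (2:ℝ) ^ (n+1) * ‖q‖ ^ (2 * (n+1) ^ 2 + 2 * (n+1)) / (cbd ‖q‖ * cbd ‖q‖)
      = (2 * ‖q‖ ^ (4 * n + 4)) * ((2:ℝ) ^ n * ‖q‖ ^ (2 * n ^ 2 + 2 * n) / (cbd ‖q‖ * cbd ‖q‖)) := by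
    rw [show 2 * (n+1) ^ 2 + 2 * (n+1) = (2 * n ^ 2 + 2 * n) + (4 * n + 4) from by ring,
      pow_add, pow_succ]
    ring
  rw [hexpand]
  have hfac : 2 * ‖q‖ ^ (4 * n + 4) ≤ 1/2 := by linarith
  exact mul_le_mul_of_nonneg_right hfac e1 |>.trans_eq (by ring)

lemma uu_norm_le (p : ℕ × ℕ) :
    ‖uu q z p‖ ≤ (2:ℝ) ^ p.1 * ‖q‖ ^ (2 * p.1 ^ 2 + 2 * p.1) / (cbd ‖q‖ * cbd ‖q‖) * ‖q‖ ^ p.2 := by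
  obtain ⟨n, m⟩ := p
  have h0 : (0:ℝ) ≤ ‖q‖ := norm_nonneg q
  have hc : (0:ℝ) < cbd ‖q‖ := cbd_pos _
  have h1 : ‖z ^ n * q ^ (2 * n ^ 2 + 2 * n) / pp q 0 (n + 1)‖
      ≤ ‖q‖ ^ (2 * n ^ 2 + 2 * n) / cbd ‖q‖ := by
    rw [norm_div, norm_mul, norm_pow, norm_pow]
    apply div_le_div₀ (by positivity)
    · calc ‖z‖ ^ n * ‖q‖ ^ (2 * n ^ 2 + 2 * n) ≤ 1 * ‖q‖ ^ (2 * n ^ 2 + 2 * n) :=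
          mul_le_mul_of_nonneg_right (pow_le_one₀ (norm_nonneg z) hz) (by positivity)
        _ = ‖q‖ ^ (2 * n ^ 2 + 2 * n) := one_mul _
    · exact hc
    · exact pp_norm_ge hq _
  have h2 : ‖gb q m n * (z * q) ^ m‖ ≤ 2 ^ n / cbd ‖q‖ * ‖q‖ ^ m := by
    rw [norm_mul, norm_pow, norm_mul]
    apply mul_le_mul (gb_norm_le hq m n)
    · apply pow_le_pow_left₀ (by positivity)
      calc ‖z‖ * ‖q‖ ≤ 1 * ‖q‖ := mul_le_mul_of_nonneg_right hz h0
        _ = ‖q‖ := one_mul _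
    · positivity
    · positivity
  calc ‖uu q z (n, m)‖ = ‖z ^ n * q ^ (2 * n ^ 2 + 2 * n) / pp q 0 (n + 1)‖
        * ‖gb q m n * (z * q) ^ m‖ := by rw [uu, norm_mul]
    _ ≤ (‖q‖ ^ (2 * n ^ 2 + 2 * n) / cbd ‖q‖) * (2 ^ n / cbd ‖q‖ * ‖q‖ ^ m) := by
        apply mul_le_mul h1 h2 (norm_nonneg _) (by positivity)
    _ = (2:ℝ) ^ n * ‖q‖ ^ (2 * n ^ 2 + 2 * n) / (cbd ‖q‖ * cbd ‖q‖) * ‖q‖ ^ m := by ring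

lemma uu_summable : Summable (uu q z) := by
  apply Summable.of_norm_bounded
    (g := fun p : ℕ × ℕ => (2:ℝ) ^ p.1 * ‖q‖ ^ (2 * p.1 ^ 2 + 2 * p.1) / (cbd ‖q‖ * cbd ‖q‖) * ‖q‖ ^ p.2)
  · exact Summable.mul_of_nonneg (uu_summable_aux hq hz)
      (summable_geometric_of_lt_one (norm_nonneg q) hq)
      (fun n => div_nonneg (by positivity) (mul_pos (cbd_pos _) (cbd_pos _)).le)
      (fun m => by positivity)
  · exact uu_norm_le hq hz

end main

theorem andrews_omega (q z : ℂ) (hq : ‖q‖ < 1) (hz : ‖z‖ ≤ 1)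
    (hden : ∀ k : ℕ, 1 - z * q ^ (2 * k + 1) ≠ 0) :
    ∑' n : ℕ, z ^ n * q ^ (2 * n ^ 2 + 2 * n) /
        (qPoch q (q ^ 2) (n + 1) * qPoch (z * q) (q ^ 2) (n + 1))
      = ∑' n : ℕ, z ^ n * q ^ n / qPoch q (q ^ 2) (n + 1) := by
  have hr0 : (0:ℝ) ≤ ‖q‖ := norm_nonneg q
  have hzq : ‖z * q‖ < 1 := by
    rw [norm_mul]
    calc ‖z‖ * ‖q‖ ≤ 1 * ‖q‖ := mul_le_mul_of_nonneg_right hz hr0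
      _ = ‖q‖ := one_mul _
      _ < 1 := hq
  have hqpoch : ∀ n, qPoch q (q ^ 2) n = pp q 0 n := by
    intro n
    rw [qPoch, pp, ← Finset.range_eq_Ico]
    apply Finset.prod_congr rfl
    intro k _
    have : q * (q ^ 2) ^ k = q ^ (2 * k + 1) := by
      rw [← pow_mul, pow_succ]; ring
    rw [this]
  have hqpochz : ∀ n, qPoch (z * q) (q ^ 2) n
      = ∏ k ∈ Finset.range n, (1 - z * q * q ^ (2 * k)) := by
    intro n
    rw [qPoch]
    apply Finset.prod_congr rfl
    intro k _
    rw [← pow_mul]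
  have hu : Summable (uu q z) := uu_summable hq hz
  have hterm : ∀ n : ℕ, z ^ n * q ^ (2 * n ^ 2 + 2 * n) /
        (qPoch q (q ^ 2) (n + 1) * qPoch (z * q) (q ^ 2) (n + 1))
      = ∑' m : ℕ, uu q z (n, m) := by
    intro n
    rw [hqpoch, hqpochz, div_mul_eq_div_div, div_eq_mul_inv, ← qbinom hq hzq n,
      ← tsum_mul_left]
    exact tsum_congr fun m => rfl
  have hstep2 : ∑' p : ℕ × ℕ, uu q z p
      = ∑' N : ℕ, ∑ kl ∈ antidiagonal N, uu q z kl := by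
    conv_rhs => congr; ext N; rw [← Finset.sum_finset_coe, ← tsum_fintype (L := .unconditional _)]
    rw [← Finset.HasAntidiagonal.sigmaAntidiagonalEquivProd.tsum_eq (uu q z)]
    exact (Finset.HasAntidiagonal.sigmaAntidiagonalEquivProd.summable_iff.mpr hu).tsum_sigma'
      (fun N => (hasSum_fintype _).summable)
  have hkey : ∀ N : ℕ, ∑ kl ∈ antidiagonal N, uu q z kl
      = z ^ N * q ^ N / pp q 0 (N + 1) := by
    intro N
    rw [Finset.Nat.sum_antidiagonal_eq_sum_range_succ_mk]
    have h1 := finite_identity hq N 0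
    have hrw : z ^ N * q ^ N / pp q 0 (N + 1)
        = ∑ n ∈ Finset.range (N + 1), z ^ N * q ^ N / pp q 0 (N + 1) *
            (q ^ (2 * n ^ 2 + (2 * 0 + 1) * n) * gc q N n * pp q (n + 0 + 1) (N + 0 + 1)) := by
      rw [← Finset.mul_sum, h1, mul_one]
    rw [hrw]
    apply Finset.sum_congr rfl
    intro n hn
    rw [Finset.mem_range] at hn
    obtain ⟨t, rfl⟩ : ∃ t, N = n + t := ⟨N - n, by omega⟩
    rw [show n + t - n = t from by omega]
    rw [gc, if_pos (by omega : n ≤ n + t), show n + t - n = t from by omega]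
    rw [uu]
    have hsplit : pp q 0 (n + t + 0 + 1) = pp q 0 (n + 1) * pp q (n + 0 + 1) (n + t + 0 + 1) :=
      (pp_mul (by omega) (by omega)).symm
    have hne1 : pp q 0 (n + 1) ≠ 0 := pp_ne_zero hq _ _
    have hne2 : pp q (n + 0 + 1) (n + t + 0 + 1) ≠ 0 := pp_ne_zero hq _ _
    rw [show pp q 0 (n + t + 1) = pp q 0 (n + t + 0 + 1) from by norm_num, hsplit]
    field_simp
    ring
  calc ∑' n : ℕ, z ^ n * q ^ (2 * n ^ 2 + 2 * n) /
        (qPoch q (q ^ 2) (n + 1) * qPoch (z * q) (q ^ 2) (n + 1))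
      = ∑' n : ℕ, ∑' m : ℕ, uu q z (n, m) := tsum_congr hterm
    _ = ∑' p : ℕ × ℕ, uu q z p := (Summable.tsum_prod' hu hu.prod_factor).symm
    _ = ∑' N : ℕ, ∑ kl ∈ antidiagonal N, uu q z kl := hstep2
    _ = ∑' N : ℕ, z ^ N * q ^ N / pp q 0 (N + 1) := tsum_congr hkey
    _ = ∑' n : ℕ, z ^ n * q ^ n / qPoch q (q ^ 2) (n + 1) :=
        tsum_congr fun N => by rw [hqpoch]
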